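/- Let G be a finite p-group of conjugate type (p^k, 1) for a prime p and k ≥ 1. If |G/Z(G)| > p^{2k}, then the centralizer C_G(x) is non-abelian for every x ∈ G \ Z(G). -/

import Mathlib

/-- For a finite `p`-group of conjugate type `(p^k, 1)` (`p` prime, `k ≥ 1`) with
`|G/Z(G)| > p^(2k)`, the centralizer of every non-central element is non-abelian. -/
theorem stmt19 (G : Type*) [Group G] [Finite G] (p k : ℕ) (hp : p.Prime) (hk : 1 ≤ k)
    (hpG : IsPGroup p G)
    (htype : ∀ x : G, x ∉ Subgroup.center G → (Subgroup.centralizer {x}).index = p ^ k)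
    (hbig : p ^ (2 * k) < Nat.card (G ⧸ Subgroup.center G)) :
    ∀ x : G, x ∉ Subgroup.center G →
      ¬IsMulCommutative (Subgroup.centralizer ({x} : Set G)) := by
  intro x hx hcomm
  set C := Subgroup.centralizer ({x} : Set G) with hC
  have hpk0 : p ^ k ≠ 0 := pow_ne_zero _ hp.pos.ne'
  have hpk1 : p ^ k ≠ 1 := by
    have := hp.one_lt
    have : 1 < p ^ k := one_lt_pow₀ (by omega) (by omega)
    omega
  have hZC : Subgroup.center G ≤ C := Subgroup.center_le_centralizer _
  -- step 1: centralizer of any noncentral element of C equals C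
  have step1 : ∀ y : G, y ∈ C → y ∉ Subgroup.center G →
      Subgroup.centralizer ({y} : Set G) = C := by
    intro y hyC hy
    have hle : C ≤ Subgroup.centralizer ({y} : Set G) := by
      intro z hz
      rw [Subgroup.mem_centralizer_singleton_iff]
      exact (Subgroup.mul_comm_of_mem_isMulCommutative C hyC hz).symm
    have := Subgroup.relIndex_mul_index hle
    rw [htype x hx, htype y hy] at this
    have h1 : C.relIndex (Subgroup.centralizer ({y} : Set G)) = 1 :=
      Nat.eq_of_mul_eq_mul_right (Nat.pos_of_ne_zero hpk0) (this.trans (one_mul _).symm)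
    exact le_antisymm (Subgroup.relIndex_eq_one.mp h1) hle
  -- step 2: pick g outside C
  have hCne : C ≠ ⊤ := by
    intro h
    have : C.index = 1 := by rw [h]; exact Subgroup.index_top
    rw [htype x hx] at this; exact hpk1 this
  obtain ⟨g, hg⟩ : ∃ g : G, g ∉ C := by
    by_contra h
    push_neg at h
    exact hCne ((Subgroup.eq_top_iff' C).mpr h)
  have hgnc : g ∉ Subgroup.center G := fun h => hg (hZC h)
  -- step 3: C ⊓ centralizer {g} = center
  have step3 : C ⊓ Subgroup.centralizer ({g} : Set G) = Subgroup.center G := by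
    apply le_antisymm
    · rintro y ⟨hyC, hyg⟩
      by_contra hy
      have hcyC := step1 y hyC hy
      apply hg
      rw [← hcyC, Subgroup.mem_centralizer_singleton_iff]
      exact (Subgroup.mem_centralizer_singleton_iff.mp hyg).symm
    · exact le_inf hZC (Subgroup.center_le_centralizer _)
  -- step 4: relindex of center in C is ≤ p^k
  have hrel : (Subgroup.center G).relIndex C ≤ p ^ k := by
    have h1 : (Subgroup.center G).relIndex C
        = (Subgroup.centralizer ({g} : Set G)).relIndex C := by
      rw [← step3, Subgroup.inf_relIndex_left]
    rw [h1]
    have hne : (Subgroup.centralizer ({g} : Set G)).relIndex ⊤ ≠ 0 := by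
      rw [Subgroup.relIndex_top_right]
      exact Subgroup.index_ne_zero_of_finite
    calc (Subgroup.centralizer ({g} : Set G)).relIndex C
        ≤ (Subgroup.centralizer ({g} : Set G)).relIndex ⊤ :=
          Subgroup.relIndex_le_of_le_right le_top hne
      _ = p ^ k := by rw [Subgroup.relIndex_top_right, htype g hgnc]
  -- step 5: conclude
  have hmul := Subgroup.relIndex_mul_index hZC
  rw [htype x hx] at hmul
  have : (Subgroup.center G).index ≤ p ^ (2 * k) := by
    rw [← hmul, two_mul, pow_add]
    exact Nat.mul_le_mul_right _ hrel
  rw [Subgroup.index] at this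
  omega
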